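/- arXiv:1511.03357 — 7 statements merged into one kernel-verified Lean document; each statement's English description precedes it below -/
import Mathlib

section
/- For all x ≥ 1 and y ≥ 2, Φ(x, y) − Φ₀(x, y) = O(x / (y log y)), where the implied constant is absolute. -/
open Finset

-- telescoping
lemma tele_aux (f : ℕ → ℝ) (p : ℕ) : ∀ m, p ≤ m →
    ∑ n ∈ Finset.Ico p m, (f n - f (n+1)) = f p - f m := by
  intro m hm
  induction m, hm using Nat.le_induction with
  | base => simp
  | succ m hm ih => rw [Finset.sum_Ico_succ_top hm, ih]; ring

-- Chebyshev from primorial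
lemma cheb (n : ℕ) : ∑ p ∈ (Finset.range (n+1)).filter Nat.Prime, Real.log p ≤ n * Real.log 4 := by
  have h0 : ∀ p ∈ (Finset.range (n+1)).filter Nat.Prime, (0:ℝ) < p := by
    intro p hp
    simp only [mem_filter] at hp
    exact_mod_cast hp.2.pos
  have h1 : Real.log (primorial n) ≤ Real.log ((4:ℕ)^n) := by
    apply Real.log_le_log (by exact_mod_cast primorial_pos n)
    exact_mod_cast primorial_le_4_pow n
  have h2 : ((primorial n : ℕ) : ℝ) = ∏ p ∈ (Finset.range (n+1)).filter Nat.Prime, (p:ℝ) := by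
    rw [primorial]; push_cast; rfl
  rw [h2] at h1
  rw [Real.log_prod (fun p hp => ne_of_gt (h0 p hp))] at h1
  calc ∑ p ∈ (Finset.range (n+1)).filter Nat.Prime, Real.log p ≤ Real.log ((4:ℕ)^n) := h1
    _ = n * Real.log 4 := by push_cast [Real.log_pow]; ring

lemma theta_bound (n : ℕ) (s : Finset ℕ) (hs : ∀ p ∈ s, p.Prime ∧ p ≤ n) :
    ∑ p ∈ s, Real.log p ≤ n * Real.log 4 := by
  refine le_trans (Finset.sum_le_sum_of_subset_of_nonneg ?_ ?_) (cheb n)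
  · intro p hp
    simp only [mem_filter, mem_range]
    exact ⟨Nat.lt_succ_of_le (hs p hp).2, (hs p hp).1⟩
  · intro p hp _
    simp only [mem_filter, mem_range] at hp
    exact Real.log_nonneg (by exact_mod_cast hp.2.one_lt.le)


lemma key_sum (M N : ℕ) (hM : 1 ≤ M) :
    ∑ p ∈ (Finset.Ioc M N).filter Nat.Prime, Real.log p * ((p:ℝ)^2)⁻¹
      ≤ 7 * Real.log 4 / (M + 1) := by
  have hlog4 : (0:ℝ) < Real.log 4 := Real.log_pos (by norm_num)
  have hM1 : (0:ℝ) < (M:ℝ) + 1 := by positivity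
  rcases le_or_gt N M with hNM | hMN
  · rw [Finset.Ioc_eq_empty (by omega)]
    simp only [filter_empty, sum_empty]
    positivity
  set P := (Finset.Ioc M N).filter Nat.Prime with hP
  have hPmem : ∀ p ∈ P, M < p ∧ p ≤ N ∧ p.Prime := by
    intro p hp
    simp only [hP, mem_filter, mem_Ioc] at hp
    exact ⟨hp.1.1, hp.1.2, hp.2⟩
  set g : ℕ → ℝ := fun n => ((n:ℝ)^2)⁻¹ with hg
  have hsplit : ∀ p ∈ P, Real.log p * g p
      = (∑ n ∈ Finset.Ioc M N, if p ≤ n then Real.log p * (g n - g (n+1)) else 0)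
        + Real.log p * g (N+1) := by
    intro p hp
    obtain ⟨hMp, hpN, _⟩ := hPmem p hp
    have h1 : ∑ n ∈ Finset.Ico p (N+1), (g n - g (n+1)) = g p - g (N+1) :=
      tele_aux g p (N+1) (by omega)
    have h2 : Finset.Ico p (N+1) = (Finset.Ioc M N).filter (fun n => p ≤ n) := by
      ext n; simp only [mem_Ico, mem_filter, mem_Ioc]; omega
    rw [h2, Finset.sum_filter] at h1
    calc Real.log p * g p = Real.log p * ((g p - g (N+1)) + g (N+1)) := by ring
      _ = Real.log p * (∑ n ∈ Finset.Ioc M N, if p ≤ n then (g n - g (n+1)) else 0)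
          + Real.log p * g (N+1) := by rw [h1]; ring
      _ = _ := by
          rw [Finset.mul_sum]
          congr 1
          exact Finset.sum_congr rfl fun n _ => by split <;> simp
  rw [Finset.sum_congr rfl hsplit, Finset.sum_add_distrib]
  have hgantitone : ∀ n : ℕ, 1 ≤ n → 0 ≤ g n - g (n+1) := by
    intro n hn
    have h1 : (0:ℝ) < (n:ℝ)^2 := by positivity
    have h2 : ((n:ℝ))^2 ≤ ((n:ℝ)+1)^2 := by nlinarith [Nat.cast_nonneg (α := ℝ) n]
    simp only [hg]
    push_cast
    rw [sub_nonneg]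
    exact inv_anti₀ h1 h2
  have htermA : ∑ p ∈ P, ∑ n ∈ Finset.Ioc M N, (if p ≤ n then Real.log p * (g n - g (n+1)) else 0)
      ≤ 6 * Real.log 4 / (M+1) := by
    rw [Finset.sum_comm]
    have hbound : ∀ n ∈ Finset.Ioc M N,
        ∑ p ∈ P, (if p ≤ n then Real.log p * (g n - g (n+1)) else 0)
          ≤ 3 * Real.log 4 * ((n:ℝ)^2)⁻¹ := by
      intro n hn
      simp only [mem_Ioc] at hn
      have hn1 : 1 ≤ n := by omega
      have hnR : (1:ℝ) ≤ (n:ℝ) := by exact_mod_cast hn1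
      have hnpos : (0:ℝ) < (n:ℝ) := by linarith
      have hgd : g n - g (n+1) ≤ 3 * ((n:ℝ)^3)⁻¹ := by
        simp only [hg]
        push_cast
        have e : ((n:ℝ)^2)⁻¹ - (((n:ℝ)+1)^2)⁻¹ = (2*(n:ℝ)+1)/((n:ℝ)^2*((n:ℝ)+1)^2) := by
          field_simp
          ring
        rw [e, ← div_eq_mul_inv, div_le_div_iff₀ (by positivity) (by positivity)]
        nlinarith [sq_nonneg ((n:ℝ))]
      have hsum_eq : ∑ p ∈ P, (if p ≤ n then Real.log p * (g n - g (n+1)) else 0)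
          = (∑ p ∈ P, if p ≤ n then Real.log p else 0) * (g n - g (n+1)) := by
        rw [Finset.sum_mul]
        exact Finset.sum_congr rfl fun p _ => by split <;> simp
      rw [hsum_eq]
      have hθ : (∑ p ∈ P, if p ≤ n then Real.log p else 0) ≤ n * Real.log 4 := by
        rw [← Finset.sum_filter]
        apply theta_bound
        intro p hp
        simp only [mem_filter] at hp
        exact ⟨(hPmem p hp.1).2.2, hp.2⟩
      calc (∑ p ∈ P, if p ≤ n then Real.log p else 0) * (g n - g (n+1))
          ≤ ((n:ℝ) * Real.log 4) * (g n - g (n+1)) :=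
            mul_le_mul_of_nonneg_right hθ (hgantitone n hn1)
        _ ≤ ((n:ℝ) * Real.log 4) * (3 * ((n:ℝ)^3)⁻¹) :=
            mul_le_mul_of_nonneg_left hgd (by positivity)
        _ = 3 * Real.log 4 * ((n:ℝ)^2)⁻¹ := by
            field_simp
    calc ∑ n ∈ Finset.Ioc M N, ∑ p ∈ P, (if p ≤ n then Real.log p * (g n - g (n+1)) else 0)
        ≤ ∑ n ∈ Finset.Ioc M N, 3 * Real.log 4 * ((n:ℝ)^2)⁻¹ := Finset.sum_le_sum hbound
      _ = 3 * Real.log 4 * ∑ n ∈ Finset.Ioc M N, ((n:ℝ)^2)⁻¹ := by rw [Finset.mul_sum]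
      _ ≤ 3 * Real.log 4 * (2 / ((M:ℝ)+1)) := by
          apply mul_le_mul_of_nonneg_left _ (by positivity)
          have : Finset.Ioc M N = Finset.Ioo M (N+1) := by
            ext k; simp only [mem_Ioc, mem_Ioo]; omega
          rw [this]
          have := sum_Ioo_inv_sq_le (α := ℝ) M (N+1)
          push_cast at this ⊢
          convert this using 2
      _ = 6 * Real.log 4 / ((M:ℝ)+1) := by ring
  have htermB : ∑ p ∈ P, Real.log p * g (N+1) ≤ Real.log 4 / ((M:ℝ)+1) := by
    rw [← Finset.sum_mul]
    have h1 : ∑ p ∈ P, Real.log p ≤ N * Real.log 4 :=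
      theta_bound N P (fun p hp => ⟨(hPmem p hp).2.2, (hPmem p hp).2.1⟩)
    have hgpos : 0 ≤ g (N+1) := by simp only [hg]; positivity
    have hMN' : ((M:ℝ)) + 1 ≤ (N:ℝ) + 1 := by
      have : (M:ℝ) ≤ (N:ℝ) := by exact_mod_cast hMN.le
      linarith
    calc (∑ p ∈ P, Real.log p) * g (N+1) ≤ ((N:ℝ) * Real.log 4) * g (N+1) :=
          mul_le_mul_of_nonneg_right h1 hgpos
      _ ≤ Real.log 4 / ((M:ℝ)+1) := by
          simp only [hg]
          push_cast
          rw [← div_eq_mul_inv, div_le_div_iff₀ (by positivity) (by positivity)]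
          have hA : (N:ℝ)*((M:ℝ)+1) ≤ ((N:ℝ)+1)^2 := by
            nlinarith [mul_le_mul_of_nonneg_left hMN' (Nat.cast_nonneg (α := ℝ) N)]
          nlinarith [mul_le_mul_of_nonneg_right hA hlog4.le]
  calc _ ≤ 6 * Real.log 4 / ((M:ℝ)+1) + Real.log 4 / ((M:ℝ)+1) := add_le_add htermA htermB
    _ = 7 * Real.log 4 / ((M:ℝ)+1) := by ring


open Finset Classical in
/-- The number of positive integers `n ≤ x` all of whose prime factors exceed `y`. -/
noncomputable def Phi (x y : ℝ) : ℕ :=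
  ((Finset.Icc 1 ⌊x⌋₊).filter (fun n => ∀ p : ℕ, p.Prime → p ∣ n → y < p)).card

open Finset Classical in
/-- The number of squarefree positive integers `n ≤ x` all of whose prime factors exceed `y`. -/
noncomputable def Phi0 (x y : ℝ) : ℕ :=
  ((Finset.Icc 1 ⌊x⌋₊).filter
    (fun n => Squarefree n ∧ ∀ p : ℕ, p.Prime → p ∣ n → y < p)).card

theorem phi_sub_phi0_bound :
    ∃ C : ℝ, 0 < C ∧ ∀ x y : ℝ, 1 ≤ x → 2 ≤ y →
      |(Phi x y : ℝ) - (Phi0 x y : ℝ)| ≤ C * x / (y * Real.log y) := by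
  classical
  refine ⟨7 * Real.log 4, by positivity, ?_⟩
  intro x y hx hy
  have hx0 : (0:ℝ) ≤ x := by linarith
  have hy0 : (0:ℝ) ≤ y := by linarith
  have hlogy : 0 < Real.log y := Real.log_pos (by linarith)
  have hlog4 : (0:ℝ) < Real.log 4 := Real.log_pos (by norm_num)
  set N := ⌊x⌋₊ with hN
  set M := ⌊y⌋₊ with hM
  have hM2 : 2 ≤ M := Nat.le_floor (by exact_mod_cast hy)
  have hMy : (M:ℝ) ≤ y := Nat.floor_le hy0
  have hyM1 : y < (M:ℝ) + 1 := by exact_mod_cast Nat.lt_floor_add_one y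
  have hNx : (N:ℝ) ≤ x := Nat.floor_le hx0
  simp only [Phi, Phi0]
  set A := (Finset.Icc 1 N).filter (fun n => ∀ p : ℕ, p.Prime → p ∣ n → y < p) with hA
  set A0 := (Finset.Icc 1 N).filter
    (fun n => Squarefree n ∧ ∀ p : ℕ, p.Prime → p ∣ n → y < p) with hA0
  have hsub : A0 ⊆ A := Finset.monotone_filter_right _ (fun n _ h => h.2)
  have hcard : A0.card ≤ A.card := Finset.card_le_card hsub
  rw [abs_of_nonneg (sub_nonneg.mpr (by exact_mod_cast hcard)),
    ← Nat.cast_sub hcard, ← Finset.card_sdiff_of_subset hsub]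
  set P := (Finset.Ioc M N).filter Nat.Prime with hP
  have hsubB : A \ A0 ⊆ P.biUnion (fun p => (Finset.Ioc 0 N).filter (fun m => p * p ∣ m)) := by
    intro n hn
    rw [Finset.mem_sdiff, hA, hA0, Finset.mem_filter, Finset.mem_filter, Finset.mem_Icc] at hn
    obtain ⟨⟨⟨hn1, hnN⟩, hQ⟩, hnot⟩ := hn
    have hnsf : ¬ Squarefree n := by
      intro hsf
      exact hnot ⟨⟨hn1, hnN⟩, hsf, hQ⟩
    rw [Nat.squarefree_iff_prime_squarefree] at hnsf
    push_neg at hnsf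
    obtain ⟨p, hp, hpd⟩ := hnsf
    have hpp : p.Prime := hp
    have hpdvd : p ∣ n := (dvd_mul_right p p).trans hpd
    have hyp : y < (p:ℝ) := hQ p hpp hpdvd
    have hMp : M < p := by exact_mod_cast lt_of_le_of_lt (α := ℝ) hMy hyp
    have hppn : p * p ≤ n := Nat.le_of_dvd (by omega) hpd
    have hpN : p ≤ N := by nlinarith [hpp.two_le]
    refine Finset.mem_biUnion.mpr ⟨p, ?_, ?_⟩
    · exact Finset.mem_filter.mpr ⟨Finset.mem_Ioc.mpr ⟨hMp, hpN⟩, hpp⟩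
    · exact Finset.mem_filter.mpr ⟨Finset.mem_Ioc.mpr ⟨by omega, hnN⟩, hpd⟩
  have hcard2 : (A \ A0).card ≤ ∑ p ∈ P, N / (p * p) := by
    refine le_trans (Finset.card_le_card hsubB) (le_trans Finset.card_biUnion_le ?_)
    refine Finset.sum_le_sum fun p hp => ?_
    rw [Nat.Ioc_filter_dvd_card_eq_div]
  have hsum : ∑ p ∈ P, ((p:ℝ)^2)⁻¹ ≤ 7 * Real.log 4 / (y * Real.log y) := by
    have step : ∑ p ∈ P, ((p:ℝ)^2)⁻¹ ≤ (∑ p ∈ P, Real.log p * ((p:ℝ)^2)⁻¹) / Real.log y := by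
      rw [Finset.sum_div]
      refine Finset.sum_le_sum fun p hp => ?_
      rw [hP, Finset.mem_filter, Finset.mem_Ioc] at hp
      have hMp : (M:ℝ) + 1 ≤ (p:ℝ) := by exact_mod_cast hp.1.1
      have hyp : y < (p:ℝ) := lt_of_lt_of_le hyM1 hMp
      have hlp : Real.log y ≤ Real.log (p:ℝ) := Real.log_le_log (by linarith) hyp.le
      rw [le_div_iff₀ hlogy]
      have hp2 : (0:ℝ) ≤ ((p:ℝ)^2)⁻¹ := by positivity
      calc ((p:ℝ)^2)⁻¹ * Real.log y ≤ ((p:ℝ)^2)⁻¹ * Real.log p := by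
            exact mul_le_mul_of_nonneg_left hlp hp2
        _ = Real.log p * ((p:ℝ)^2)⁻¹ := by ring
    refine le_trans step ?_
    have hkey := key_sum M N (by omega)
    calc (∑ p ∈ P, Real.log p * ((p:ℝ)^2)⁻¹) / Real.log y
        ≤ (7 * Real.log 4 / ((M:ℝ) + 1)) / Real.log y := by gcongr
      _ = 7 * Real.log 4 / (((M:ℝ) + 1) * Real.log y) := by rw [div_div]
      _ ≤ 7 * Real.log 4 / (y * Real.log y) := by
          gcongr
  calc ((A \ A0).card : ℝ) ≤ ((∑ p ∈ P, N / (p * p) : ℕ) : ℝ) := by exact_mod_cast hcard2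
    _ ≤ ∑ p ∈ P, x * ((p:ℝ)^2)⁻¹ := by
        push_cast
        refine Finset.sum_le_sum fun p hp => ?_
        rw [hP, Finset.mem_filter, Finset.mem_Ioc] at hp
        have hppos : (0:ℝ) < (p:ℝ) := by exact_mod_cast hp.2.pos
        calc ((N / (p * p) : ℕ) : ℝ) ≤ (N:ℝ) / ((p:ℝ) * (p:ℝ)) := by
              exact_mod_cast Nat.cast_div_le
          _ ≤ x / ((p:ℝ) * (p:ℝ)) := by gcongr
          _ = x * ((p:ℝ)^2)⁻¹ := by rw [sq]; ring
    _ = x * ∑ p ∈ P, ((p:ℝ)^2)⁻¹ := by rw [Finset.mul_sum]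
    _ ≤ x * (7 * Real.log 4 / (y * Real.log y)) := by
        exact mul_le_mul_of_nonneg_left hsum hx0
    _ = 7 * Real.log 4 * x / (y * Real.log y) := by ring
end

section
/- For any positive integer n and prime p not dividing n, if the set of subset sums of {φ(d) : d | n} equals {0, 1, ..., n} (i.e., n is φ-practical) and p ≤ n + 2, then pn is φ-practical. -/
open Pointwise

/-- The set of all subset sums of `{φ(d) : d ∣ n}`. -/
def SubsetSums (n : ℕ) : Set ℕ :=
  {k | ∃ D : Finset ℕ, D ⊆ n.divisors ∧ k = ∑ d ∈ D, Nat.totient d}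

/-- `n` is `φ`-practical if every integer in `{0, 1, ..., n}` is a subset sum of
the totients of the divisors of `n`. -/
def PhiPractical (n : ℕ) : Prop := 0 < n ∧ SubsetSums n = Set.Iic n

theorem phiPractical_mul_prime (n p : ℕ) (hn : PhiPractical n) (hp : p.Prime)
    (hpn : ¬ p ∣ n) (hle : p ≤ n + 2) : PhiPractical (p * n) := by
  obtain ⟨hn0, hsum⟩ := hn
  have hp1 : 1 < p := hp.one_lt
  have hpn0 : p * n ≠ 0 := by positivity
  have key : ∀ m r : ℕ, m ≤ n → r ≤ n → (p - 1) * m + r ∈ SubsetSums (p * n) := by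
    intro m r hm hr
    have h1 : m ∈ SubsetSums n := by rw [hsum]; exact hm
    have h2 : r ∈ SubsetSums n := by rw [hsum]; exact hr
    obtain ⟨D2, hD2, rfl⟩ := h1
    obtain ⟨D1, hD1, rfl⟩ := h2
    refine ⟨D1 ∪ D2.image (p * ·), ?_, ?_⟩
    · intro d hd
      rw [Finset.mem_union] at hd
      rcases hd with hd | hd
      · have h := Nat.mem_divisors.mp (hD1 hd)
        exact Nat.mem_divisors.mpr ⟨h.1.mul_left p, hpn0⟩
      · obtain ⟨e, he, rfl⟩ := Finset.mem_image.mp hd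
        have h := Nat.mem_divisors.mp (hD2 he)
        exact Nat.mem_divisors.mpr ⟨Nat.mul_dvd_mul_left p h.1, hpn0⟩
    · have hdisj : Disjoint D1 (D2.image (p * ·)) := by
        rw [Finset.disjoint_left]
        intro a ha ha'
        obtain ⟨e, he, rfl⟩ := Finset.mem_image.mp ha'
        have hdvd : p * e ∣ n := (Nat.mem_divisors.mp (hD1 ha)).1
        exact hpn (dvd_trans (Dvd.intro e rfl) hdvd)
      rw [Finset.sum_union hdisj,
        Finset.sum_image (by intro a _ b _ h; exact Nat.eq_of_mul_eq_mul_left (by omega) h)]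
      have heq : ∀ e ∈ D2, (p * e).totient = (p - 1) * e.totient := by
        intro e he
        have hed : e ∣ n := (Nat.mem_divisors.mp (hD2 he)).1
        have hcop : p.Coprime e := hp.coprime_iff_not_dvd.mpr (fun h => hpn (h.trans hed))
        rw [Nat.totient_mul hcop, Nat.totient_prime hp]
      rw [Finset.sum_congr rfl heq, ← Finset.mul_sum]
      omega
  refine ⟨by positivity, ?_⟩
  ext k
  simp only [Set.mem_Iic]
  constructor
  · rintro ⟨D, hD, rfl⟩
    calc ∑ d ∈ D, Nat.totient d ≤ ∑ d ∈ (p * n).divisors, Nat.totient d :=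
          Finset.sum_le_sum_of_subset hD
      _ = p * n := Nat.sum_totient _
  · intro hk
    rcases le_or_gt (k / (p - 1)) n with hq | hq
    · have h := Nat.div_add_mod k (p - 1)
      have hr : k % (p - 1) ≤ n := by
        have := Nat.mod_lt k (show 0 < p - 1 by omega)
        omega
      have hkey := key (k / (p - 1)) (k % (p - 1)) hq hr
      rwa [h] at hkey
    · have hmul : (p - 1) * n ≤ k := by
        have h1 : k / (p - 1) * (p - 1) ≤ k := Nat.div_mul_le_self k (p - 1)
        have h1' : (p - 1) * (k / (p - 1)) ≤ k := by rw [Nat.mul_comm]; exact h1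
        have h2 : (p - 1) * n < (p - 1) * (k / (p - 1)) :=
          Nat.mul_lt_mul_of_pos_left hq (show 0 < p - 1 by omega)
        exact (h2.trans_le h1').le
      have hpe : (p - 1) * n + n = p * n := by
        rcases p with _ | q
        · omega
        · exact (Nat.succ_mul q n).symm
      have hsub : k - (p - 1) * n ≤ n :=
        Nat.sub_le_iff_le_add.mpr (by rw [Nat.add_comm, hpe]; exact hk)
      have hkey := key n (k - (p - 1) * n) le_rfl hsub
      rwa [Nat.add_sub_cancel' hmul] at hkey
end

section
/- If n is φ-practical, p is a prime not dividing n, and pn is φ-practical, then p ≤ n + 2. -/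
open Pointwise

theorem prime_le_of_phiPractical_mul (n p : ℕ) (hn : PhiPractical n) (hp : p.Prime)
    (hpn : ¬ p ∣ n) (hmul : PhiPractical (p * n)) : p ≤ n + 2 := by
  obtain ⟨hn0, _⟩ := hn
  obtain ⟨hpn0, hs⟩ := hmul
  have hp2 := hp.two_le
  have h1 : n + 1 ∈ SubsetSums (p * n) := by
    rw [hs]
    have : n + 1 ≤ p * n := by nlinarith
    exact this
  obtain ⟨D, hD, hsum⟩ := h1
  by_cases hall : ∀ d ∈ D, d ∣ n
  · have hsub : D ⊆ n.divisors := fun d hd => Nat.mem_divisors.2 ⟨hall d hd, hn0.ne'⟩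
    have hle : ∑ d ∈ D, Nat.totient d ≤ ∑ d ∈ n.divisors, Nat.totient d :=
      Finset.sum_le_sum_of_subset hsub
    rw [Nat.sum_totient] at hle
    omega
  · push_neg at hall
    obtain ⟨d, hdD, hdn⟩ := hall
    have hddvd : d ∣ p * n := (Nat.mem_divisors.1 (hD hdD)).1
    have hpd : p ∣ d := by
      by_contra hpd
      exact hdn (((hp.coprime_iff_not_dvd.mpr hpd).symm).dvd_of_dvd_mul_left hddvd)
    obtain ⟨m, rfl⟩ := hpd
    have hmn : m ∣ n := (mul_dvd_mul_iff_left (by omega : p ≠ 0)).mp hddvd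
    have hm0 : 0 < m := Nat.pos_of_dvd_of_pos hmn hn0
    have hpm : ¬ p ∣ m := fun h => hpn (h.trans hmn)
    have hcop : Nat.Coprime p m := hp.coprime_iff_not_dvd.mpr hpm
    have htot : Nat.totient (p * m) = (p - 1) * Nat.totient m := by
      rw [Nat.totient_mul hcop, Nat.totient_prime hp]
    have hm1 : 1 ≤ Nat.totient m := Nat.totient_pos.mpr hm0
    have hge : p - 1 ≤ Nat.totient (p * m) := by
      rw [htot]; nlinarith
    have hle : Nat.totient (p * m) ≤ n + 1 := by
      rw [hsum]
      exact Finset.single_le_sum (fun i _ => Nat.zero_le _) hdD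
    omega
end

section
/- A squarefree positive integer n with prime factorization p₁ < p₂ < ... < p_k is φ-practical if and only if p_i ≤ 2 + p₁p₂⋯p_{i−1} for every i = 1, ..., k (with the empty product equal to 1). -/
open Pointwise

lemma le_of_mem_subsetSums {n k : ℕ} (h : k ∈ SubsetSums n) : k ≤ n := by
  obtain ⟨D, hD, rfl⟩ := h
  calc ∑ d ∈ D, Nat.totient d ≤ ∑ d ∈ n.divisors, Nat.totient d :=
        Finset.sum_le_sum_of_subset hD
    _ = n := Nat.sum_totient n

lemma rev_lemma (n : ℕ) : 0 < n → Squarefree n →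
    (∀ p ∈ n.primeFactors,
        p ≤ 2 + ∏ q ∈ n.primeFactors.filter (fun q => q < p), q) →
    ∀ k ≤ n, k ∈ SubsetSums n := by
  induction n using Nat.strong_induction_on with
  | _ n ih =>
  intro hn hsf hc k hk
  rcases eq_or_lt_of_le (Nat.one_le_iff_ne_zero.mpr (Nat.pos_iff_ne_zero.mp hn)) with h1 | h1
  · -- n = 1
    have hn1 : n = 1 := h1.symm
    subst hn1
    interval_cases k
    · exact ⟨∅, by simp, by simp⟩
    · exact ⟨{1}, by simp, by simp⟩
  · -- n ≥ 2
    have hne : n.primeFactors.Nonempty := Nat.nonempty_primeFactors.mpr h1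
    set p := n.primeFactors.max' hne with hpdef
    have hpmem : p ∈ n.primeFactors := n.primeFactors.max'_mem hne
    have hp : p.Prime := Nat.prime_of_mem_primeFactors hpmem
    have hpd : p ∣ n := Nat.dvd_of_mem_primeFactors hpmem
    obtain ⟨m, hnm⟩ : ∃ m, n = m * p := ⟨n / p, (Nat.div_mul_cancel hpd).symm⟩
    have hm0 : 0 < m := by
      rcases Nat.eq_zero_or_pos m with h | h
      · simp [h] at hnm; omega
      · exact h
    have hmd : m ∣ n := ⟨p, hnm⟩
    have hpm : ¬ p ∣ m := by
      intro hdvd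
      have : p * p ∣ n := by
        rw [hnm]; exact Nat.mul_dvd_mul hdvd dvd_rfl
      exact hp.not_isUnit (hsf p this)
    have cop : Nat.Coprime p m := (Nat.Prime.coprime_iff_not_dvd hp).mpr hpm
    have hsm : Squarefree m := hsf.squarefree_of_dvd hmd
    have hunion : n.primeFactors = m.primeFactors ∪ {p} := by
      rw [hnm, Nat.Coprime.primeFactors_mul cop.symm, Nat.Prime.primeFactors hp]
    have hpnotm : p ∉ m.primeFactors := fun h => hpm (Nat.dvd_of_mem_primeFactors h)
    have hfilt : n.primeFactors.filter (fun q => q < p) = m.primeFactors := by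
      ext q
      simp only [Finset.mem_filter, hunion, Finset.mem_union, Finset.mem_singleton]
      constructor
      · rintro ⟨hq | hq, hlt⟩
        · exact hq
        · omega
      · intro hq
        refine ⟨Or.inl hq, ?_⟩
        have hle : q ≤ p := n.primeFactors.le_max' q (by rw [hunion]; exact Finset.mem_union_left _ hq)
        rcases eq_or_lt_of_le hle with h | h
        · exact absurd (h ▸ hq) hpnotm
        · exact h
    have hprodm : ∏ q ∈ m.primeFactors, q = m := Nat.prod_primeFactors_of_squarefree hsm
    have hpbound : p ≤ 2 + m := by
      have := hc p hpmem
      rwa [hfilt, hprodm] at this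
    -- condition for m
    have hcm : ∀ q ∈ m.primeFactors,
        q ≤ 2 + ∏ r ∈ m.primeFactors.filter (fun r => r < q), r := by
      intro q hq
      have hqn : q ∈ n.primeFactors := by rw [hunion]; exact Finset.mem_union_left _ hq
      have hqp : q < p := by
        have hle : q ≤ p := n.primeFactors.le_max' q hqn
        rcases eq_or_lt_of_le hle with h | h
        · exact absurd (h ▸ hq) hpnotm
        · exact h
      have hfeq : n.primeFactors.filter (fun r => r < q) = m.primeFactors.filter (fun r => r < q) := by
        ext r
        simp only [Finset.mem_filter, hunion, Finset.mem_union, Finset.mem_singleton]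
        constructor
        · rintro ⟨hr | hr, hlt⟩
          · exact ⟨hr, hlt⟩
          · omega
        · rintro ⟨hr, hlt⟩; exact ⟨Or.inl hr, hlt⟩
      have := hc q hqn
      rwa [hfeq] at this
    have hmn : m < n := by
      rw [hnm]
      exact (Nat.lt_mul_iff_one_lt_right hm0).mpr hp.one_lt
    have ihm : ∀ j ≤ m, j ∈ SubsetSums m := ih m hmn hm0 hsm hcm
    -- choose t, s
    have hp1 : 0 < p - 1 := by have := hp.two_le; omega
    obtain ⟨t, s, htm, hsm', hts⟩ : ∃ t s, t ≤ m ∧ s ≤ m ∧ s + t * (p - 1) = k := by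
      rcases le_or_gt (k / (p - 1)) m with h | h
      · refine ⟨k / (p - 1), k % (p - 1), h, ?_, ?_⟩
        · have := Nat.mod_lt k hp1
          omega
        · rw [Nat.mul_comm]; exact Nat.mod_add_div k (p - 1)
      · refine ⟨m, k - m * (p - 1), le_rfl, ?_, ?_⟩
        · have hmk : m * (p - 1) + m = m * p := by
            have h2 : p - 1 + 1 = p := by omega
            conv_rhs => rw [← h2]
            rw [Nat.mul_succ]
          have hkn : k ≤ m * (p - 1) + m := by rw [hmk, ← hnm]; exact hk
          omega
        · have hle : (m + 1) * (p - 1) ≤ k := by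
            rw [← Nat.le_div_iff_mul_le hp1]; omega
          have : m * (p - 1) ≤ k := by
            calc m * (p - 1) ≤ (m + 1) * (p - 1) := Nat.mul_le_mul_right _ (by omega)
              _ ≤ k := hle
          omega
    obtain ⟨Ds, hDs, hDssum⟩ := ihm s hsm'
    obtain ⟨Dt, hDt, hDtsum⟩ := ihm t htm
    have hn0 : n ≠ 0 := by omega
    have hdivsub : m.divisors ⊆ n.divisors := Nat.divisors_subset_of_dvd hn0 hmd
    refine ⟨Ds ∪ Dt.image (fun d => p * d), ?_, ?_⟩
    · intro x hx
      rcases Finset.mem_union.mp hx with hx | hx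
      · exact hdivsub (hDs hx)
      · obtain ⟨d, hd, rfl⟩ := Finset.mem_image.mp hx
        have hdm : d ∣ m := (Nat.mem_divisors.mp (hDt hd)).1
        refine Nat.mem_divisors.mpr ⟨?_, hn0⟩
        rw [hnm, Nat.mul_comm m p]
        exact Nat.mul_dvd_mul dvd_rfl hdm
    · have hdisj : Disjoint Ds (Dt.image (fun d => p * d)) := by
        rw [Finset.disjoint_left]
        intro a ha hb
        obtain ⟨d, _, rfl⟩ := Finset.mem_image.mp hb
        have ham : p * d ∣ m := (Nat.mem_divisors.mp (hDs ha)).1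
        exact hpm (dvd_trans (Dvd.intro d rfl) ham)
      rw [Finset.sum_union hdisj]
      have hinj : ∀ x ∈ Dt, ∀ y ∈ Dt, p * x = p * y → x = y := by
        intro x _ y _ h
        exact Nat.eq_of_mul_eq_mul_left hp.pos h
      rw [Finset.sum_image hinj]
      have heach : ∀ d ∈ Dt, Nat.totient (p * d) = (p - 1) * Nat.totient d := by
        intro d hd
        have hdm : d ∣ m := (Nat.mem_divisors.mp (hDt hd)).1
        have : Nat.Coprime p d := Nat.Coprime.coprime_dvd_right hdm cop
        rw [Nat.totient_mul this, Nat.totient_prime hp]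
      rw [Finset.sum_congr rfl heach, ← Finset.mul_sum, ← hDssum, ← hDtsum,
        Nat.mul_comm (p - 1) t]
      omega

theorem squarefree_phiPractical_iff (n : ℕ) (hn : 0 < n) (hsf : Squarefree n) :
    PhiPractical n ↔
      ∀ p ∈ n.primeFactors,
        p ≤ 2 + ∏ q ∈ n.primeFactors.filter (fun q => q < p), q := by
  constructor
  · intro hP p hp
    by_contra hlt
    push_neg at hlt
    set P := ∏ q ∈ n.primeFactors.filter (fun q => q < p), q with hPdef
    have hpn : p ≤ n := Nat.le_of_dvd hn (Nat.dvd_of_mem_primeFactors hp)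
    have hP1n : P + 1 ≤ n := by omega
    have hmem : P + 1 ∈ SubsetSums n := by
      rw [hP.2]; exact Set.mem_Iic.mpr hP1n
    obtain ⟨D, hD, hsum⟩ := hmem
    by_cases hbig : ∃ d ∈ D, ∃ q ∈ d.primeFactors, p ≤ q
    · obtain ⟨d, hd, q, hq, hpq⟩ := hbig
      have hd0 : 0 < d := Nat.pos_of_mem_divisors (hD hd)
      have hdvd : Nat.totient q ∣ Nat.totient d :=
        Nat.totient_dvd_of_dvd (Nat.dvd_of_mem_primeFactors hq)
      have htpos : 0 < Nat.totient d := Nat.totient_pos.mpr hd0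
      have hle : Nat.totient q ≤ Nat.totient d := Nat.le_of_dvd htpos hdvd
      have hq' : q.Prime := Nat.prime_of_mem_primeFactors hq
      rw [Nat.totient_prime hq'] at hle
      have hsumle : Nat.totient d ≤ P + 1 := by
        rw [hsum]
        exact Finset.single_le_sum (fun i _ => Nat.zero_le _) hd
      omega
    · push_neg at hbig
      have hPpos : 0 < P := by
        apply Finset.prod_pos
        intro q hq
        exact (Nat.prime_of_mem_primeFactors (Finset.mem_filter.mp hq).1).pos
      have hsub : D ⊆ P.divisors := by
        intro d hd
        have hdn : d ∣ n := (Nat.mem_divisors.mp (hD hd)).1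
        have hsd : Squarefree d := hsf.squarefree_of_dvd hdn
        have hsubpf : d.primeFactors ⊆ n.primeFactors.filter (fun q => q < p) := by
          intro q hq
          exact Finset.mem_filter.mpr
            ⟨Nat.primeFactors_mono hdn (by omega) hq, hbig d hd q hq⟩
        have hddvd : d ∣ P := by
          rw [← Nat.prod_primeFactors_of_squarefree hsd]
          exact Finset.prod_dvd_prod_of_subset _ _ _ hsubpf
        exact Nat.mem_divisors.mpr ⟨hddvd, by omega⟩
      have : P + 1 ≤ P := by
        rw [hsum]
        calc ∑ d ∈ D, Nat.totient d ≤ ∑ d ∈ P.divisors, Nat.totient d :=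
              Finset.sum_le_sum_of_subset hsub
          _ = P := Nat.sum_totient P
      omega
  · intro hc
    refine ⟨hn, ?_⟩
    ext k
    simp only [Set.mem_Iic]
    exact ⟨le_of_mem_subsetSums, fun hk => rev_lemma n hn hsf hc k hk⟩
end

section
/- Let a be a positive integer and b a positive integer coprime to a. Then H(ab) > H(a) if and only if b/φ(b) ≥ 1 + 1/a, where H(k) = (k+1)/φ(k). -/
/-- `H(k) = (k+1)/φ(k)` as a rational number. -/
def Hfun (k : ℕ) : ℚ := ((k : ℚ) + 1) / Nat.totient k

theorem H_mul_gt_iff (a b : ℕ) (ha : 0 < a) (hb : 0 < b) (hco : Nat.Coprime a b) :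
    Hfun a < Hfun (a * b) ↔ 1 + 1 / (a : ℚ) ≤ (b : ℚ) / Nat.totient b := by
  have hpa := Nat.totient_pos.2 ha
  have hpb := Nat.totient_pos.2 hb
  have hqa : (0:ℚ) < Nat.totient a := by exact_mod_cast hpa
  have hqb : (0:ℚ) < Nat.totient b := by exact_mod_cast hpb
  have hqab : (0:ℚ) < a := by exact_mod_cast ha
  -- key natural-number equivalence
  have key : (a+1) * Nat.totient b ≤ a*b ↔ (a+1) * Nat.totient b < a*b+1 :=
    (Nat.lt_succ_iff).symm
  rw [Hfun, Hfun, Nat.totient_mul hco]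
  push_cast
  rw [div_lt_div_iff₀ hqa (by positivity),
    show (1:ℚ)+1/a = ((a:ℚ)+1)/a by field_simp, div_le_div_iff₀ hqab hqb]
  constructor
  · intro h
    have h1 : ((a:ℚ)+1) * Nat.totient b < (a:ℚ)*b + 1 := by
      have := mul_lt_mul_of_pos_right h (by positivity : (0:ℚ) < ((Nat.totient a : ℚ))⁻¹)
      nlinarith [hqa]
    have h2 : (a+1) * Nat.totient b < a*b+1 := by exact_mod_cast h1
    have h3 := key.2 h2
    have h4 : ((a:ℚ)+1) * Nat.totient b ≤ (a:ℚ)*b := by exact_mod_cast h3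
    nlinarith
  · intro h
    have h4 : ((a:ℚ)+1) * Nat.totient b ≤ (a:ℚ)*b := by nlinarith
    have h5 : ((a:ℚ)+1) * Nat.totient b < (a:ℚ)*b + 1 := by linarith
    nlinarith
end

section
/- If v is a squarefree positive integer all of whose prime factors exceed y ≥ 2 and v ≤ x, then v/φ(v) ≤ (1 + 1/(y−1))^{log x / log y}, and in particular v/φ(v) ≤ 1 + 2(log x)/y for y ≥ 2 log x ≥ 4. -/
theorem totient_ratio_bound (v : ℕ) (x y : ℝ) (hv : 0 < v) (hsf : Squarefree v)
    (hbig : ∀ p ∈ v.primeFactors, y < p) (hvx : (v : ℝ) ≤ x) (hy : 2 ≤ y) :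
    (v : ℝ) / Nat.totient v ≤ (1 + 1 / (y - 1)) ^ (Real.log x / Real.log y) ∧
      (2 * Real.log x ≤ y → 4 ≤ 2 * Real.log x →
        (v : ℝ) / Nat.totient v ≤ 1 + 2 * Real.log x / y) := by
  have hy1 : (1:ℝ) < y := lt_of_lt_of_le one_lt_two hy
  have hlogy : 0 < Real.log y := Real.log_pos hy1
  have hx1 : (1:ℝ) ≤ x := le_trans (Nat.one_le_cast.mpr hv) hvx
  have hlogx : 0 ≤ Real.log x := Real.log_nonneg hx1
  have hc : (0:ℝ) ≤ 1 / (y - 1) := div_nonneg zero_le_one (by linarith)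
  set r := v.primeFactors.card with hr
  -- ratio = product
  have hφpos : 0 < Nat.totient v := Nat.totient_pos.mpr hv
  have hratio : (v : ℝ) / Nat.totient v = ∏ p ∈ v.primeFactors, (1 - (p:ℝ)⁻¹)⁻¹ := by
    have h := Nat.totient_eq_mul_prod_factors v
    have hR : (Nat.totient v : ℝ) = v * ∏ p ∈ v.primeFactors, (1 - (p:ℝ)⁻¹) := by
      have h2 := congrArg (fun q : ℚ => (q:ℝ)) h
      push_cast at h2
      exact h2
    have hppos : ∀ p ∈ v.primeFactors, (0:ℝ) < 1 - (p:ℝ)⁻¹ := by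
      intro p hp
      have h2 : (2:ℝ) ≤ p := by exact_mod_cast (Nat.prime_of_mem_primeFactors hp).two_le
      have : (p:ℝ)⁻¹ < 1 := by
        rw [inv_lt_one_iff₀]; right; linarith
      linarith
    have hprodpos : 0 < ∏ p ∈ v.primeFactors, (1 - (p:ℝ)⁻¹) :=
      Finset.prod_pos hppos
    have hv0 : (v:ℝ) ≠ 0 := Nat.cast_ne_zero.mpr hv.ne'
    rw [hR, Finset.prod_inv_distrib, div_mul_eq_div_div, div_self hv0, one_div]
  -- each factor bound
  have hfac : ∀ p ∈ v.primeFactors, (1 - (p:ℝ)⁻¹)⁻¹ ≤ 1 + 1 / (y - 1) := by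
    intro p hp
    have hyp : y < p := hbig p hp
    have hp1 : (1:ℝ) < p := lt_trans hy1 hyp
    have hp0 : (0:ℝ) < p := by linarith
    have : (1 - (p:ℝ)⁻¹)⁻¹ = 1 + 1 / ((p:ℝ) - 1) := by
      have hne : (p:ℝ) - 1 ≠ 0 := by linarith
      field_simp
      ring
    rw [this]
    have : (1:ℝ) / ((p:ℝ) - 1) ≤ 1 / (y - 1) := by
      apply one_div_le_one_div_of_le <;> linarith
    linarith
  -- product ≤ (1+c)^r
  have hprodle : (v : ℝ) / Nat.totient v ≤ (1 + 1 / (y - 1)) ^ r := by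
    rw [hratio, ← Finset.prod_const]
    apply Finset.prod_le_prod _ hfac
    intro p hp
    have hyp : y < p := hbig p hp
    have hp1 : (1:ℝ) < p := lt_trans hy1 hyp
    have : (p:ℝ)⁻¹ < 1 := by rw [inv_lt_one_iff₀]; right; linarith
    exact inv_nonneg.mpr (by linarith)
  -- r ≤ log x / log y
  have hyr : y ^ r ≤ (v:ℝ) := by
    calc y ^ r = ∏ _p ∈ v.primeFactors, y := by rw [Finset.prod_const]
    _ ≤ ∏ p ∈ v.primeFactors, (p:ℝ) := by
        apply Finset.prod_le_prod (fun _ _ => by linarith) (fun p hp => (hbig p hp).le)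
    _ = (v:ℝ) := by
        rw [← Nat.cast_prod, Nat.prod_primeFactors_of_squarefree hsf]
  have hrle : (r:ℝ) ≤ Real.log x / Real.log y := by
    rw [le_div_iff₀ hlogy]
    have := Real.log_le_log (by positivity) (le_trans hyr hvx)
    rwa [Real.log_pow] at this
  have hbase : (1:ℝ) ≤ 1 + 1 / (y - 1) := by linarith
  have part1 : (v : ℝ) / Nat.totient v ≤ (1 + 1 / (y - 1)) ^ (Real.log x / Real.log y) := by
    calc (v : ℝ) / Nat.totient v ≤ (1 + 1 / (y - 1)) ^ r := hprodle
    _ = (1 + 1 / (y - 1)) ^ (r : ℝ) := by rw [Real.rpow_natCast]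
    _ ≤ (1 + 1 / (y - 1)) ^ (Real.log x / Real.log y) :=
        Real.rpow_le_rpow_of_exponent_le hbase hrle
  refine ⟨part1, fun h1 h2 => ?_⟩
  -- part 2
  set t := Real.log x / Real.log y with ht
  have hlx2 : (2:ℝ) ≤ Real.log x := by linarith
  have hy4 : (4:ℝ) ≤ y := by linarith
  -- (y-1) * log y ≥ y
  have hlog4 : (4:ℝ)/3 ≤ Real.log y := by
    have h4 : Real.log 4 ≤ Real.log y := Real.log_le_log (by norm_num) hy4
    have : Real.log 4 = 2 * Real.log 2 := by
      rw [show (4:ℝ) = 2^2 by norm_num, Real.log_pow]; push_cast; ring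
    nlinarith [Real.log_two_gt_d9]
  have hkey : y ≤ (y - 1) * Real.log y := by nlinarith
  -- u := t / (y-1) = log x / ((y-1) log y) ≤ log x / y ≤ 1/2
  set u := Real.log x / ((y - 1) * Real.log y) with hu
  have hden : 0 < (y - 1) * Real.log y := mul_pos (by linarith) hlogy
  have hu_le : u ≤ Real.log x / y := by
    apply div_le_div_of_nonneg_left hlogx (by linarith) hkey
  have hu_half : u ≤ 1/2 := by
    have : Real.log x / y ≤ 1/2 := by
      rw [div_le_iff₀ (by linarith : (0:ℝ) < y)]; linarith
    linarith
  have hu0 : 0 ≤ u := div_nonneg hlogx hden.le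
  -- (1+c)^t ≤ exp(c*t) = exp u
  have hct : 1 / (y - 1) * t = u := by
    rw [ht, hu]; field_simp
  have step1 : (1 + 1 / (y - 1)) ^ t ≤ Real.exp u := by
    have ht0 : 0 ≤ t := div_nonneg hlogx hlogy.le
    calc (1 + 1 / (y - 1)) ^ t ≤ (Real.exp (1 / (y - 1))) ^ t := by
          apply Real.rpow_le_rpow (by linarith)
            (by have := Real.add_one_le_exp (1 / (y - 1)); linarith) ht0
    _ = Real.exp (1 / (y - 1) * t) := by
          rw [← Real.exp_mul]
    _ = Real.exp u := by rw [hct]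
  have step2 : Real.exp u ≤ 1 + 2 * u := by
    have h1u : u < 1 := by linarith
    have := Real.exp_bound_div_one_sub_of_interval hu0 h1u
    have h2 : 1 / (1 - u) ≤ 1 + 2 * u := by
      rw [div_le_iff₀ (by linarith : (0:ℝ) < 1 - u)]
      nlinarith
    linarith
  have final : 1 + 2 * u ≤ 1 + 2 * (Real.log x / y) := by
    have : 2 * u ≤ 2 * (Real.log x / y) := by linarith
    linarith
  calc (v : ℝ) / Nat.totient v ≤ (1 + 1 / (y - 1)) ^ t := part1
  _ ≤ Real.exp u := step1
  _ ≤ 1 + 2 * u := step2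
  _ ≤ 1 + 2 * Real.log x / y := by
      rw [mul_div_assoc]; exact final
end

section
/- If m is a starter with squarefull part s > 1, then the largest prime factor of α(m) is strictly less than the largest prime factor of s. -/
open Pointwise

/-- The largest prime factor of `n` (junk value `0` if `n ≤ 1`). -/
def Pplus (n : ℕ) : ℕ := n.primeFactors.sup id

/-- `d` is an initial divisor of `n`: `d ∣ n` and every prime factor of `d` is
smaller than every prime factor of `n / d`. -/
def InitialDivisor (d n : ℕ) : Prop :=
  d ∣ n ∧ ∀ p ∈ d.primeFactors, ∀ q ∈ (n / d).primeFactors, p < q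

/-- A positive integer is squarefull if `p² ∣ s` for every prime `p ∣ s`. -/
def IsSquarefull (s : ℕ) : Prop := ∀ p : ℕ, p.Prime → p ∣ s → p ^ 2 ∣ s

/-- `s` is the squarefull part of `m`: the largest squarefull divisor of `m`. -/
def IsSquarefullPart (s m : ℕ) : Prop :=
  s ∣ m ∧ IsSquarefull s ∧ ∀ t, t ∣ m → IsSquarefull t → t ≤ s

/-- A starter is a `φ`-practical `m` such that either `m / P⁺(m)` is not
`φ`-practical or `P⁺(m)² ∣ m`. -/
def Starter (m : ℕ) : Prop :=
  PhiPractical m ∧ (¬ PhiPractical (m / Pplus m) ∨ Pplus m ^ 2 ∣ m)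

/-- `a = α(m)`: the largest proper initial divisor of `m` that is `φ`-practical. -/
def IsAlpha (a m : ℕ) : Prop :=
  InitialDivisor a m ∧ a < m ∧ PhiPractical a ∧
    ∀ d, InitialDivisor d m → d < m → PhiPractical d → d ≤ a

/-! Auxiliary lemmas -/

lemma sum_totient_le_of_subset {n : ℕ} (hn : n ≠ 0) {D : Finset ℕ}
    (hD : D ⊆ n.divisors) : ∑ d ∈ D, Nat.totient d ≤ n := by
  calc ∑ d ∈ D, Nat.totient d ≤ ∑ d ∈ n.divisors, Nat.totient d :=
        Finset.sum_le_sum_of_subset hD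
    _ = n := Nat.sum_totient n

lemma subsetSums_subset_Iic {n : ℕ} (hn : n ≠ 0) : SubsetSums n ⊆ Set.Iic n := by
  rintro k ⟨D, hD, rfl⟩
  exact sum_totient_le_of_subset hn hD

/-- Gap lemma: the least prime of `m/a` is at most `a+2` when `m` is φ-practical
and `a` is an initial divisor with `a < m`. -/
lemma minFac_le_add_two {m a : ℕ} (hm : PhiPractical m) (hI : InitialDivisor a m)
    (hlt : a < m) (ha0 : 0 < a) : (m / a).minFac ≤ a + 2 := by
  obtain ⟨hm0, hmS⟩ := hm
  have hmem : (a + 1 : ℕ) ∈ SubsetSums m := by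
    rw [hmS]; exact hlt
  obtain ⟨D, hD, hsum⟩ := hmem
  by_cases hall : ∀ e ∈ D, e ∣ a
  · have hsub : D ⊆ a.divisors := fun e he => Nat.mem_divisors.2 ⟨hall e he, ha0.ne'⟩
    have := sum_totient_le_of_subset ha0.ne' hsub
    omega
  · push_neg at hall
    obtain ⟨e, heD, hea⟩ := hall
    have hem : e ∣ m := (Nat.mem_divisors.1 (hD heD)).1
    have hma : a ∣ m := hI.1
    have hmdiv : m = a * (m / a) := (Nat.mul_div_cancel' hma).symm
    have hcop : ¬ Nat.Coprime e (m / a) := by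
      intro hco
      exact hea (hco.dvd_of_dvd_mul_right (hmdiv ▸ hem))
    obtain ⟨t, htp, hte, htb⟩ := Nat.Prime.not_coprime_iff_dvd.mp hcop
    have hrt : (m / a).minFac ≤ t := Nat.minFac_le_of_dvd htp.two_le htb
    have he0 : 0 < e := Nat.pos_of_dvd_of_pos hem hm0
    have hphi : t - 1 ≤ Nat.totient e := by
      have h1 : Nat.totient t ∣ Nat.totient e := Nat.totient_dvd_of_dvd hte
      have h2 : 0 < Nat.totient e := Nat.totient_pos.2 he0
      have h3 := Nat.le_of_dvd h2 h1
      rwa [Nat.totient_prime htp] at h3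
    have hle : Nat.totient e ≤ a + 1 := by
      rw [hsum]
      exact Finset.single_le_sum (f := Nat.totient) (fun i _ => Nat.zero_le _) heD
    have := htp.two_le
    omega

lemma exists_decomp (a c k : ℕ) (hc : 1 ≤ c) (hca : c ≤ a + 1) (hk : k ≤ a * (c + 1)) :
    ∃ A B, A ≤ a ∧ B ≤ a ∧ k = A + c * B := by
  rcases le_or_gt k (c * a) with h | h
  · refine ⟨k % c, k / c, ?_, ?_, (Nat.mod_add_div k c).symm⟩
    · have := Nat.mod_lt k (show 0 < c by omega)
      omega
    · have := Nat.div_le_div_right (c := c) h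
      rwa [Nat.mul_div_cancel_left a (show 0 < c by omega)] at this
  · refine ⟨k - c * a, a, ?_, le_refl _, ?_⟩
    · have h3 : k ≤ c * a + a := by
        calc k ≤ a * (c + 1) := hk
          _ = c * a + a := by ring
      omega
    · omega

/-- Extension lemma: if `a` is φ-practical, `r` prime, `r ∤ a`, `r ≤ a + 2`,
then `a * r` is φ-practical. -/
lemma phiPractical_mul_prime_s16 {a r : ℕ} (hp : PhiPractical a) (hr : r.Prime)
    (hra : ¬ r ∣ a) (hle : r ≤ a + 2) : PhiPractical (a * r) := by
  obtain ⟨ha0, haS⟩ := hp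
  have har0 : 0 < a * r := Nat.mul_pos ha0 hr.pos
  refine ⟨har0, Set.Subset.antisymm (subsetSums_subset_Iic har0.ne') ?_⟩
  intro k hk
  have hk' : k ≤ a * r := hk
  have hr2 := hr.two_le
  obtain ⟨A, B, hA, hB, hkAB⟩ := exists_decomp a (r - 1) k (by omega) (by omega)
    (by have : r - 1 + 1 = r := by omega
        rw [this]; exact hk')
  have hAmem : A ∈ SubsetSums a := by rw [haS]; exact hA
  have hBmem : B ∈ SubsetSums a := by rw [haS]; exact hB
  obtain ⟨DA, hDA, rfl⟩ := hAmem
  obtain ⟨DB, hDB, rfl⟩ := hBmem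
  classical
  refine ⟨DA ∪ DB.image (fun d => r * d), ?_, ?_⟩
  · intro x hx
    rcases Finset.mem_union.1 hx with hx | hx
    · have := Nat.mem_divisors.1 (hDA hx)
      exact Nat.mem_divisors.2 ⟨this.1.trans ⟨r, rfl⟩, har0.ne'⟩
    · obtain ⟨d, hd, rfl⟩ := Finset.mem_image.1 hx
      have hda : d ∣ a := (Nat.mem_divisors.1 (hDB hd)).1
      refine Nat.mem_divisors.2 ⟨?_, har0.ne'⟩
      rw [mul_comm a r]
      exact mul_dvd_mul_left r hda
  · have hdisj : Disjoint DA (DB.image (fun d => r * d)) := by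
      rw [Finset.disjoint_left]
      intro x hxA hxI
      obtain ⟨d, _, rfl⟩ := Finset.mem_image.1 hxI
      have hxa : r * d ∣ a := (Nat.mem_divisors.1 (hDA hxA)).1
      exact hra ((dvd_mul_right r d).trans hxa)
    rw [Finset.sum_union hdisj]
    have hinj : ∀ x ∈ DB, ∀ y ∈ DB, r * x = r * y → x = y := by
      intro x _ y _ h
      exact Nat.eq_of_mul_eq_mul_left hr.pos h
    rw [Finset.sum_image hinj]
    have hsum2 : ∑ d ∈ DB, Nat.totient (r * d) = (r - 1) * ∑ d ∈ DB, Nat.totient d := by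
      rw [Finset.mul_sum]
      refine Finset.sum_congr rfl (fun d hd => ?_)
      have hda : d ∣ a := (Nat.mem_divisors.1 (hDB hd)).1
      have hcop : Nat.Coprime r d := (hr.coprime_iff_not_dvd).2
        (fun h => hra (h.trans hda))
      rw [Nat.totient_mul hcop, Nat.totient_prime hr]
    rw [hsum2, hkAB]

/-! Main theorem -/

theorem pplus_alpha_lt_pplus_squarefull_part (m s a : ℕ) (hm : Starter m)
    (hs : IsSquarefullPart s m) (hs1 : 1 < s) (ha : IsAlpha a m) :
    Pplus a < Pplus s := by
  obtain ⟨hmP, hstart⟩ := hm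
  obtain ⟨hsdvd, hsfull, hsmax⟩ := hs
  obtain ⟨haI, halt, haP, hamax⟩ := ha
  have hm0 : 0 < m := hmP.1
  have ha0 : 0 < a := haP.1
  have hadvd : a ∣ m := haI.1
  have hmdiv : m = a * (m / a) := (Nat.mul_div_cancel' hadvd).symm
  have hb0 : 0 < m / a := Nat.div_pos (Nat.le_of_dvd hm0 hadvd) ha0
  have hb1 : 1 < m / a := by
    have hne : m / a ≠ 1 := by
      intro h
      rw [h, mul_one] at hmdiv
      omega
    omega
  -- q := Pplus s is a prime factor of s
  obtain ⟨q, hqmem, hq_eq⟩ := Finset.exists_mem_eq_sup s.primeFactors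
    (Nat.nonempty_primeFactors.2 hs1) id
  have hqP : q.Prime := (Nat.mem_primeFactors.1 hqmem).1
  have hqs : q ∣ s := (Nat.mem_primeFactors.1 hqmem).2.1
  have hq_eq' : Pplus s = q := hq_eq
  by_cases hqb : q ∣ m / a
  · -- easy case: all primes of a are < q
    rw [hq_eq']
    have hq0 : (0 : ℕ) < q := hqP.pos
    rw [Pplus, Finset.sup_lt_iff (by simpa using hq0)]
    intro p hp
    exact haI.2 p hp q (Nat.mem_primeFactors.2 ⟨hqP, hqb, hb0.ne'⟩)
  · -- hard case: q ∣ a, derive contradiction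
    exfalso
    have hqa : q ∣ a := by
      have hqm : q ∣ a * (m / a) := hmdiv ▸ (hqs.trans hsdvd)
      rcases (Nat.Prime.dvd_mul hqP).1 hqm with h | h
      · exact h
      · exact absurd h hqb
    -- s ∣ a
    have hscop : Nat.Coprime s (m / a) := by
      by_contra hco
      obtain ⟨t, htp, hts, htb⟩ := Nat.Prime.not_coprime_iff_dvd.mp hco
      have h1 : q < t := haI.2 q (Nat.mem_primeFactors.2 ⟨hqP, hqa, ha0.ne'⟩) t
        (Nat.mem_primeFactors.2 ⟨htp, htb, hb0.ne'⟩)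
      have h2 : t ≤ Pplus s := by
        rw [Pplus]
        exact Finset.le_sup (f := id) (Nat.mem_primeFactors.2 ⟨htp, hts, by omega⟩)
      omega
    have hsa : s ∣ a := hscop.dvd_of_dvd_mul_right (hmdiv ▸ hsdvd)
    -- r := least prime factor of m / a
    set r := (m / a).minFac with hr_def
    have hrP : r.Prime := Nat.minFac_prime (by omega)
    have hrb : r ∣ m / a := Nat.minFac_dvd _
    have hra : ¬ r ∣ a := by
      intro h
      have := haI.2 r (Nat.mem_primeFactors.2 ⟨hrP, h, ha0.ne'⟩) r
        (Nat.mem_primeFactors.2 ⟨hrP, hrb, hb0.ne'⟩)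
      omega
    -- r^2 does not divide m
    have hr2m : ¬ r ^ 2 ∣ m := by
      intro h
      have hcopra : Nat.Coprime (r ^ 2) a :=
        Nat.Coprime.pow_left _ ((hrP.coprime_iff_not_dvd).2 hra)
      have hr2b : r ^ 2 ∣ m / a := by
        refine hcopra.dvd_of_dvd_mul_right ?_
        rw [mul_comm, ← hmdiv]
        exact h
      have hcopsr : Nat.Coprime s (r ^ 2) := by
        refine Nat.Coprime.pow_right _ ?_
        rcases Nat.coprime_or_dvd_of_prime hrP s with h' | h'
        · exact h'.symm
        · exact absurd (h'.trans hsa) hra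
      have htfull : IsSquarefull (s * r ^ 2) := by
        intro p hp hpd
        rcases (Nat.Prime.dvd_mul hp).1 hpd with h' | h'
        · exact (hsfull p hp h').trans (dvd_mul_right s _)
        · have : p = r := (Nat.prime_dvd_prime_iff_eq hp hrP).1 (hp.dvd_of_dvd_pow h')
          subst this
          exact dvd_mul_left _ _
      have htdvd : s * r ^ 2 ∣ m := hmdiv ▸ mul_dvd_mul hsa hr2b
      have hmax := hsmax (s * r ^ 2) htdvd htfull
      have hr2 : 2 ≤ r := hrP.two_le
      have h4 : 4 ≤ r ^ 2 := by nlinarith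
      have h5 : s * 4 ≤ s * r ^ 2 := Nat.mul_le_mul_left s h4
      omega
    -- r <= a + 2, hence a * r is phi-practical
    have hrle : r ≤ a + 2 := minFac_le_add_two ⟨hm0, hmP.2⟩ haI halt ha0
    have harP : PhiPractical (a * r) := phiPractical_mul_prime_s16 haP hrP hra hrle
    have hardvd : a * r ∣ m := by
      rw [hmdiv]
      exact mul_dvd_mul_left a hrb
    have hbam : m / a ∣ m := Nat.div_dvd_of_dvd hadvd
    have hrm : r ∣ m := hrb.trans hbam
    have harI : InitialDivisor (a * r) m := by
      refine ⟨hardvd, ?_⟩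
      intro p hp t ht
      obtain ⟨hpP, hpd, _⟩ := Nat.mem_primeFactors.1 hp
      obtain ⟨htP, htd, htne⟩ := Nat.mem_primeFactors.1 ht
      have htd2 : t ∣ (m / a) / r := by
        rw [Nat.div_div_eq_div_mul]
        exact htd
      have htb' : t ∣ m / a := htd2.trans ⟨r, (Nat.div_mul_cancel hrb).symm⟩
      have htmem : t ∈ (m / a).primeFactors := Nat.mem_primeFactors.2 ⟨htP, htb', hb0.ne'⟩
      rcases (Nat.Prime.dvd_mul hpP).1 hpd with h' | h'
      · exact haI.2 p (Nat.mem_primeFactors.2 ⟨hpP, h', ha0.ne'⟩) t htmem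
      · have hpr : p = r := (Nat.prime_dvd_prime_iff_eq hpP hrP).1 h'
        subst hpr
        have hrlet : r ≤ t := Nat.minFac_le_of_dvd htP.two_le htb'
        rcases eq_or_lt_of_le hrlet with he | hl
        · exfalso
          apply hr2m
          have hrd2 : r ∣ (m / a) / r := he ▸ htd2
          obtain ⟨c, hc⟩ := hrd2
          have h5 : (m / a) / r * r = m / a := Nat.div_mul_cancel hrb
          rw [hc] at h5
          have hr2ma : r ^ 2 ∣ m / a := ⟨c, by rw [← h5]; ring⟩
          exact hr2ma.trans hbam
        · exact hl
    have harle : a * r ≤ m := Nat.le_of_dvd hm0 hardvd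
    rcases lt_or_eq_of_le harle with hlt2 | heq
    · have hcontra := hamax (a * r) harI hlt2 harP
      have := Nat.mul_le_mul_left a hrP.two_le
      omega
    · -- a * r = m
      have hPm : Pplus m = r := by
        apply le_antisymm
        · rw [Pplus]
          apply Finset.sup_le
          intro p hp
          obtain ⟨hpP, hpd, _⟩ := Nat.mem_primeFactors.1 hp
          rw [← heq] at hpd
          rcases (Nat.Prime.dvd_mul hpP).1 hpd with h' | h'
          · have := haI.2 p (Nat.mem_primeFactors.2 ⟨hpP, h', ha0.ne'⟩) r
              (Nat.mem_primeFactors.2 ⟨hrP, hrb, hb0.ne'⟩)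
            exact le_of_lt this
          · exact le_of_eq ((Nat.prime_dvd_prime_iff_eq hpP hrP).1 h')
        · rw [Pplus]
          exact Finset.le_sup (f := id)
            (Nat.mem_primeFactors.2 ⟨hrP, hrm, hm0.ne'⟩)
      rcases hstart with hns | hsq
      · apply hns
        rw [hPm]
        have hmr : m / r = a := by
          rw [← heq, Nat.mul_div_cancel _ hrP.pos]
        rw [hmr]
        exact haP
      · rw [hPm] at hsq
        exact hr2m hsq
end
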